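/- Fix integers 0 < q_1 < q_2 < p with gcd(q_1, q_2) = 1, and let 1 ≤ l ≤ q_2. Let N_l denote the number of pairs (r,s) of nonnegative integers with r q_1 + s q_2 = l p and r + s ≤ p. Then |N_l - l p/(q_1 q_2)| ≤ 1 if 1 ≤ l ≤ q_1, and |N_l - (q_2 - l) p/(q_2 (q_2 - q_1))| ≤ 1 if q_1 + 1 ≤ l ≤ q_2. -/

import Mathlib

open Finset

section helpers
lemma countAux' (q c : ℕ) (hq : 0 < q) (hc : c < q) (n : ℕ) :
    ((Finset.range n).filter (fun s => s % q = c)).card = (n + q - 1 - c) / q := by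
  rw [← Finset.card_range ((n + q - 1 - c) / q)]
  apply Finset.card_bij' (fun s _ => (s - c) / q) (fun t _ => c + q * t)
  · intro s hs
    simp only [mem_filter, mem_range] at hs
    obtain ⟨hsn, hsc⟩ := hs
    have hcs : c ≤ s := hsc ▸ Nat.mod_le s q
    have hdvd : q ∣ s - c := (Nat.modEq_iff_dvd' hcs).mp (by
      unfold Nat.ModEq; rw [hsc, Nat.mod_eq_of_lt hc])
    rw [mem_range, Nat.lt_iff_add_one_le, Nat.le_div_iff_mul_le hq]
    have h1 := Nat.div_mul_cancel hdvd
    have h2 : ((s - c) / q + 1) * q = (s - c) / q * q + q := by ring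
    omega
  · intro t ht
    rw [mem_range, Nat.lt_iff_add_one_le, Nat.le_div_iff_mul_le hq] at ht
    have h2 : (t + 1) * q = q * t + q := by ring
    simp only [mem_filter, mem_range]
    constructor
    · omega
    · rw [Nat.add_mul_mod_self_left, Nat.mod_eq_of_lt hc]
  · intro s hs
    simp only [mem_filter, mem_range] at hs
    obtain ⟨hsn, hsc⟩ := hs
    have hcs : c ≤ s := hsc ▸ Nat.mod_le s q
    have hdvd : q ∣ s - c := (Nat.modEq_iff_dvd' hcs).mp (by
      unfold Nat.ModEq; rw [hsc, Nat.mod_eq_of_lt hc])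
    have h1 := Nat.div_mul_cancel hdvd
    have h3 : q * ((s - c) / q) = (s - c) / q * q := by ring
    omega
  · intro t ht
    simp [Nat.mul_div_cancel_left _ hq]

lemma countIco' (q c a b : ℕ) (hq : 0 < q) (hc : c < q) :
    ((Finset.Ico a b).filter (fun s => s % q = c)).card
      = (b + q - 1 - c) / q - (a + q - 1 - c) / q := by
  rcases le_or_gt b a with h | h
  · rw [Finset.Ico_eq_empty (by omega), Finset.filter_empty, Finset.card_empty]
    exact (Nat.sub_eq_zero_of_le (Nat.div_le_div_right (by omega))).symm
  · have hsplit : Finset.range b = Finset.range a ∪ Finset.Ico a b := by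
      ext x; simp [Finset.mem_Ico]; omega
    have hdisj : Disjoint ((Finset.range a).filter (fun s => s % q = c))
        ((Finset.Ico a b).filter (fun s => s % q = c)) := by
      apply Finset.disjoint_filter_filter
      rw [Finset.disjoint_left]
      intro x hx hx2
      simp only [Finset.mem_Ico, Finset.mem_range] at *
      omega
    have hb := countAux' q c hq hc b
    rw [hsplit, Finset.filter_union, Finset.card_union_of_disjoint hdisj,
      countAux' q c hq hc a] at hb
    have hmono : (a + q - 1 - c) / q ≤ (b + q - 1 - c) / q :=
      Nat.div_le_div_right (by omega)
    omega

lemma residueChar' (q₁ q₂ M : ℕ) (h₁ : 0 < q₁) (hcop : Nat.Coprime q₁ q₂) :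
    ∃ c < q₁, ∀ s, s * q₂ ≤ M → (q₁ ∣ M - s * q₂ ↔ s % q₁ = c) := by
  haveI : NeZero q₁ := ⟨h₁.ne'⟩
  set u : (ZMod q₁)ˣ := ZMod.unitOfCoprime q₂ hcop.symm with hu
  refine ⟨((M : ZMod q₁) * (↑u⁻¹ : (ZMod q₁)ˣ)).val, ZMod.val_lt _, fun s hs => ?_⟩
  rw [← Nat.modEq_iff_dvd' hs]
  have h2 : ((((M : ZMod q₁) * (↑u⁻¹ : (ZMod q₁)ˣ)).val : ℕ) : ZMod q₁)
      = (M : ZMod q₁) * (↑u⁻¹ : (ZMod q₁)ˣ) := by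
    rw [ZMod.natCast_val, ZMod.cast_id]
  constructor
  · intro h
    have h3 : ((s * q₂ : ℕ) : ZMod q₁) = (M : ZMod q₁) :=
      (ZMod.natCast_eq_natCast_iff _ _ _).mpr h
    push_cast at h3
    have h4 : (s : ZMod q₁) * u = (M : ZMod q₁) := by
      rwa [show ((u : ZMod q₁)) = (q₂ : ZMod q₁) from ZMod.coe_unitOfCoprime _ _]
    have h5 : (s : ZMod q₁) = (M : ZMod q₁) * (↑u⁻¹ : (ZMod q₁)ˣ) := by
      rw [← h4, mul_assoc, Units.mul_inv, mul_one]
    have : (s : ZMod q₁) = ((((M : ZMod q₁) * (↑u⁻¹ : (ZMod q₁)ˣ)).val : ℕ) : ZMod q₁) := by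
      rw [h2, h5]
    have h6 := (ZMod.natCast_eq_natCast_iff _ _ _).mp this
    unfold Nat.ModEq at h6
    rwa [Nat.mod_eq_of_lt (ZMod.val_lt _)] at h6
  · intro h
    have h6 : (s : ZMod q₁) = ((((M : ZMod q₁) * (↑u⁻¹ : (ZMod q₁)ˣ)).val : ℕ) : ZMod q₁) := by
      apply (ZMod.natCast_eq_natCast_iff _ _ _).mpr
      unfold Nat.ModEq
      rw [h, Nat.mod_eq_of_lt (ZMod.val_lt _)]
    have h7 : ((s * q₂ : ℕ) : ZMod q₁) = (M : ZMod q₁) := by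
      push_cast
      rw [h6, h2]
      have hq2 : ((u : ZMod q₁)) = (q₂ : ZMod q₁) := ZMod.coe_unitOfCoprime _ _
      rw [← hq2]
      rw [mul_assoc, Units.inv_mul, mul_one]
    exact (ZMod.natCast_eq_natCast_iff _ _ _).mp h7

end helpers

set_option maxHeartbeats 1000000 in
theorem stmt_15 (p q₁ q₂ l : ℕ) (h₁ : 0 < q₁) (h₁₂ : q₁ < q₂) (h₂p : q₂ < p)
    (hcop : Nat.Coprime q₁ q₂) (hl : 1 ≤ l) (hlq₂ : l ≤ q₂)
    (N : ℕ)
    (hN : N = ((Finset.range (p + 1) ×ˢ Finset.range (p + 1)).filter fun rs =>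
        rs.1 * q₁ + rs.2 * q₂ = l * p ∧ rs.1 + rs.2 ≤ p).card) :
    (l ≤ q₁ → |(N : ℝ) - l * p / (q₁ * q₂)| ≤ 1) ∧
    (q₁ + 1 ≤ l → |(N : ℝ) - (q₂ - l : ℝ) * p / (q₂ * (q₂ - q₁ : ℝ))| ≤ 1) := by
  have hq₂ : 0 < q₂ := h₁.trans h₁₂
  have hp : 0 < p := hq₂.trans h₂p
  -- Step 1: reduce to counting s
  have hNs : N = ((Finset.range (p+1)).filter (fun s => s * q₂ ≤ l * p ∧
      q₁ ∣ (l * p - s * q₂) ∧ l * p + s * q₁ ≤ p * q₁ + s * q₂)).card := by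
    rw [hN]
    apply Finset.card_bij' (fun rs _ => rs.2) (fun s _ => ((l * p - s * q₂) / q₁, s))
    · rintro ⟨r, s⟩ hrs
      simp only [mem_filter, mem_product, mem_range] at hrs
      obtain ⟨⟨hr, hs⟩, heq, hsum⟩ := hrs
      simp only [mem_filter, mem_range]
      have h3 : (r + s) * q₁ ≤ p * q₁ := Nat.mul_le_mul_right q₁ hsum
      have h4 : (r + s) * q₁ = r * q₁ + s * q₁ := by ring
      have h5 : r * q₁ = q₁ * r := by ring
      refine ⟨hs, by omega, ⟨r, by omega⟩, by omega⟩
    · rintro s hs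
      simp only [mem_filter, mem_range] at hs
      obtain ⟨hsp, hle, ⟨r, hr⟩, hcond⟩ := hs
      have hrq : (l * p - s * q₂) / q₁ = r := by rw [hr, Nat.mul_div_cancel_left _ h₁]
      simp only [mem_filter, mem_product, mem_range]
      rw [hrq]
      have heq : r * q₁ + s * q₂ = l * p := by
        have h5 : r * q₁ = q₁ * r := by ring
        omega
      have hsum : r + s ≤ p := by
        have h6 : (r + s) * q₁ = r * q₁ + s * q₁ := by ring
        have h7 : (r + s) * q₁ ≤ p * q₁ := by omega
        exact Nat.le_of_mul_le_mul_right h7 h₁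
      exact ⟨⟨by omega, hsp⟩, heq, hsum⟩
    · rintro ⟨r, s⟩ hrs
      simp only [mem_filter, mem_product, mem_range] at hrs
      obtain ⟨⟨hr, hs⟩, heq, hsum⟩ := hrs
      have : l * p - s * q₂ = r * q₁ := by omega
      simp [this, Nat.mul_div_cancel _ h₁]
    · intro s hs
      simp
  obtain ⟨c, hc, hchar⟩ := residueChar' q₁ q₂ (l * p) h₁ hcop
  obtain ⟨m, hm1, hm2, hmiff⟩ : ∃ m, m * q₂ ≤ l * p ∧ l * p < (m + 1) * q₂ ∧
      ∀ s, (s * q₂ ≤ l * p ↔ s ≤ m) := by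
    exact ⟨l * p / q₂, Nat.div_mul_le_self _ _,
      (Nat.div_lt_iff_lt_mul hq₂).mp (lt_add_one _),
      fun s => (Nat.le_div_iff_mul_le hq₂).symm⟩
  have hmp : m ≤ p := by
    have h8 : l * p ≤ p * q₂ := by
      calc l * p ≤ q₂ * p := Nat.mul_le_mul_right p hlq₂
      _ = p * q₂ := by ring
    exact Nat.le_of_mul_le_mul_right (by omega) hq₂
  -- common real facts
  have r3 : (m : ℝ) * q₂ ≤ l * p := by exact_mod_cast hm1
  have r4 : (l : ℝ) * p + 1 ≤ (m + 1) * q₂ := by exact_mod_cast hm2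
  have rc : (c : ℝ) ≤ q₁ - 1 := by
    have : (c : ℝ) + 1 ≤ q₁ := by exact_mod_cast hc
    linarith
  have rc0 : (0:ℝ) ≤ c := Nat.cast_nonneg c
  have rq1 : (1:ℝ) ≤ q₁ := by exact_mod_cast h₁
  have rq2 : (0:ℝ) < q₂ := by exact_mod_cast hq₂
  constructor
  · -- Case A : l ≤ q₁
    intro hlA
    have hset : ((Finset.range (p+1)).filter (fun s => s * q₂ ≤ l * p ∧
        q₁ ∣ (l * p - s * q₂) ∧ l * p + s * q₁ ≤ p * q₁ + s * q₂))
        = (Finset.Ico 0 (m+1)).filter (fun s => s % q₁ = c) := by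
      ext s
      simp only [mem_filter, mem_range, Finset.mem_Ico]
      constructor
      · rintro ⟨hsp, hle, hdvd, _⟩
        exact ⟨⟨Nat.zero_le s, by rw [Nat.lt_succ_iff]; exact (hmiff s).mp hle⟩,
          (hchar s hle).mp hdvd⟩
      · rintro ⟨⟨-, hsm⟩, hres⟩
        rw [Nat.lt_succ_iff] at hsm
        have hle : s * q₂ ≤ l * p := (hmiff s).mpr hsm
        refine ⟨by omega, hle, (hchar s hle).mpr hres, ?_⟩
        have e1 : l * p ≤ q₁ * p := Nat.mul_le_mul_right p hlA
        have e2 : s * q₁ ≤ s * q₂ := Nat.mul_le_mul_left s h₁₂.le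
        have e3 : q₁ * p = p * q₁ := by ring
        omega
    rw [hset, countIco' q₁ c 0 (m+1) h₁ hc] at hNs
    have hzero : (0 + q₁ - 1 - c) / q₁ = 0 := Nat.div_eq_of_lt (by omega)
    have hX : m + 1 + q₁ - 1 - c = m + q₁ - c := by omega
    rw [hzero, Nat.sub_zero, hX] at hNs
    have f1 : ((m + q₁ - c) / q₁) * q₁ ≤ m + q₁ - c := Nat.div_mul_le_self _ _
    have f2 : m + q₁ - c < ((m + q₁ - c) / q₁ + 1) * q₁ :=
      (Nat.div_lt_iff_lt_mul h₁).mp (lt_add_one _)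
    have eN : ((m + q₁ - c) / q₁ + 1) * q₁ = ((m + q₁ - c) / q₁) * q₁ + q₁ := by ring
    have f1' : N * q₁ + c ≤ m + q₁ := by rw [hNs]; omega
    have f2' : m + q₁ + 1 ≤ N * q₁ + q₁ + c := by rw [hNs]; omega
    -- cast to ℝ
    have r1 : (N : ℝ) * q₁ + c ≤ m + q₁ := by exact_mod_cast f1'
    have r2 : (m : ℝ) + q₁ + 1 ≤ N * q₁ + q₁ + c := by exact_mod_cast f2'
    have hpos : (0:ℝ) < (q₁ : ℝ) * q₂ := by positivity
    have key : |(N : ℝ) * (q₁ * q₂) - l * p| ≤ q₁ * q₂ := by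
      rw [abs_le]
      constructor
      · nlinarith [mul_le_mul_of_nonneg_right
          (show (m:ℝ) + 1 - c ≤ N * q₁ by linarith) rq2.le,
          mul_le_mul_of_nonneg_right rc rq2.le]
      · nlinarith [mul_le_mul_of_nonneg_right r1 rq2.le, mul_nonneg rc0 rq2.le]
    have heq2 : (N : ℝ) - l * p / (q₁ * q₂) = (N * (q₁ * q₂) - l * p) / (q₁ * q₂) := by
      field_simp
    rw [heq2, abs_div, abs_of_pos hpos, div_le_one hpos]
    exact key
  · -- Case B : q₁ + 1 ≤ l
    intro hlB
    obtain ⟨k, hkdef⟩ : ∃ k, l = q₁ + k := ⟨l - q₁, by omega⟩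
    obtain ⟨d, hddef⟩ : ∃ d, q₂ = q₁ + d := ⟨q₂ - q₁, by omega⟩
    have hk1 : 1 ≤ k := by omega
    have hd1 : 1 ≤ d := by omega
    have hkp : 1 ≤ k * p := Nat.one_le_iff_ne_zero.mpr (by positivity)
    obtain ⟨a, ha0, hB1, hB2, haiff⟩ : ∃ a, 1 ≤ a ∧ k * p ≤ a * d ∧
        a * d + 1 ≤ k * p + d ∧ ∀ s, (a ≤ s ↔ k * p ≤ s * d) := by
      refine ⟨(k * p - 1) / d + 1, Nat.succ_le_succ (Nat.zero_le _), ?_, ?_, fun s => ?_⟩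
      · have h9 := (Nat.div_lt_iff_lt_mul (show 0 < d by omega)).mp
          (lt_add_one ((k * p - 1) / d))
        have e : ((k * p - 1) / d + 1) * d = (k * p - 1) / d * d + d := by ring
        omega
      · have h9 := Nat.div_mul_le_self (k * p - 1) d
        have e : ((k * p - 1) / d + 1) * d = (k * p - 1) / d * d + d := by ring
        omega
      · rw [Nat.add_one_le_iff, Nat.div_lt_iff_lt_mul (show 0 < d by omega)]
        omega
    have hcond_iff : ∀ s : ℕ, (l * p + s * q₁ ≤ p * q₁ + s * q₂) ↔ a ≤ s := by
      intro s
      have e1 : l * p = q₁ * p + k * p := by rw [hkdef]; ring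
      have e2 : s * q₂ = s * q₁ + s * d := by rw [hddef]; ring
      have e3 : q₁ * p = p * q₁ := by ring
      rw [haiff s]
      omega
    have hset : ((Finset.range (p+1)).filter (fun s => s * q₂ ≤ l * p ∧
        q₁ ∣ (l * p - s * q₂) ∧ l * p + s * q₁ ≤ p * q₁ + s * q₂))
        = (Finset.Ico a (m+1)).filter (fun s => s % q₁ = c) := by
      ext s
      simp only [mem_filter, mem_range, Finset.mem_Ico]
      constructor
      · rintro ⟨hsp, hle, hdvd, hcnd⟩
        exact ⟨⟨(hcond_iff s).mp hcnd, by rw [Nat.lt_succ_iff]; exact (hmiff s).mp hle⟩,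
          (hchar s hle).mp hdvd⟩
      · rintro ⟨⟨has, hsm⟩, hres⟩
        rw [Nat.lt_succ_iff] at hsm
        have hle : s * q₂ ≤ l * p := (hmiff s).mpr hsm
        exact ⟨by omega, hle, (hchar s hle).mpr hres, (hcond_iff s).mpr has⟩
    rw [hset, countIco' q₁ c a (m+1) h₁ hc] at hNs
    obtain ⟨F, hFdef⟩ : ∃ F, F = (m + 1 + q₁ - 1 - c) / q₁ := ⟨_, rfl⟩
    obtain ⟨G, hGdef⟩ : ∃ G, G = (a + q₁ - 1 - c) / q₁ := ⟨_, rfl⟩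
    have f1 : F * q₁ ≤ m + 1 + q₁ - 1 - c := by
      rw [hFdef]; exact Nat.div_mul_le_self _ _
    have f2 : m + 1 + q₁ - 1 - c < (F + 1) * q₁ := by
      rw [hFdef]; exact (Nat.div_lt_iff_lt_mul h₁).mp (lt_add_one _)
    have g1 : G * q₁ ≤ a + q₁ - 1 - c := by
      rw [hGdef]; exact Nat.div_mul_le_self _ _
    have g2 : a + q₁ - 1 - c < (G + 1) * q₁ := by
      rw [hGdef]; exact (Nat.div_lt_iff_lt_mul h₁).mp (lt_add_one _)
    have eF : (F + 1) * q₁ = F * q₁ + q₁ := by ring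
    have eG : (G + 1) * q₁ = G * q₁ + q₁ := by ring
    have f1' : F * q₁ + c ≤ m + q₁ := by omega
    have f2' : m + q₁ + 1 ≤ F * q₁ + q₁ + c := by omega
    have g1' : G * q₁ + c + 1 ≤ a + q₁ := by omega
    have g2' : a + q₁ ≤ G * q₁ + q₁ + c := by omega
    have hNFG : N = F - G := by rw [hNs, hFdef, hGdef]
    clear hN hNs hset hchar hmiff hcond_iff haiff hcop hFdef hGdef f1 f2 g1 g2
    -- real coordinates
    have hrd : (q₂:ℝ) = q₁ + d := by exact_mod_cast hddef
    have hrk : (l:ℝ) = q₁ + k := by exact_mod_cast hkdef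
    have rd1 : (1:ℝ) ≤ d := by exact_mod_cast hd1
    have rk1 : (1:ℝ) ≤ k := by exact_mod_cast hk1
    have rp1 : (1:ℝ) ≤ p := by exact_mod_cast hp
    have ra1 : (1:ℝ) ≤ a := by exact_mod_cast ha0
    have rB1 : (k:ℝ) * p ≤ a * d := by exact_mod_cast hB1
    have rB2 : (a:ℝ) * d + 1 ≤ k * p + d := by exact_mod_cast hB2
    have rf1 : (F:ℝ) * q₁ + c ≤ m + q₁ := by exact_mod_cast f1'
    have rf2 : (m:ℝ) + q₁ + 1 ≤ F * q₁ + q₁ + c := by exact_mod_cast f2'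
    have rg1 : (G:ℝ) * q₁ + c + 1 ≤ a + q₁ := by exact_mod_cast g1'
    have rg2 : (a:ℝ) + q₁ ≤ G * q₁ + q₁ + c := by exact_mod_cast g2'
    have hq₁pos : (0:ℝ) < q₁ := by exact_mod_cast h₁
    have hsub : (q₂:ℝ) - q₁ = d := by rw [hrd]; ring
    have hsub2 : (q₂:ℝ) - l = d - k := by rw [hrd, hrk]; ring
    have hDpos : (0:ℝ) < (q₂:ℝ) * (q₂ - q₁) := by rw [hsub]; positivity
    have rdk : (k:ℝ) ≤ d := by
      have : (q₁:ℝ) + k ≤ q₁ + d := by rw [← hrk, ← hrd]; exact_mod_cast hlq₂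
      linarith
    have r3' : (m:ℝ) * ((q₁:ℝ) + d) ≤ ((q₁:ℝ) + k) * p := by
      rw [← hrd, ← hrk]; exact r3
    have r4' : ((q₁:ℝ) + k) * p + 1 ≤ ((m:ℝ) + 1) * ((q₁:ℝ) + d) := by
      rw [← hrd, ← hrk]; exact r4
    have hDd : (0:ℝ) ≤ ((q₁:ℝ) + d) * d := by positivity
    have hD1 : (0:ℝ) ≤ (q₁:ℝ) + d := by positivity
    have hd0 : (0:ℝ) ≤ (d:ℝ) := by linarith
    have key : |(N:ℝ) * ((q₂:ℝ) * (q₂ - q₁)) - ((q₂:ℝ) - l) * p| ≤ (q₂:ℝ) * (q₂ - q₁) := by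
      rw [hsub, hsub2, hrd, abs_le]
      have h2 := mul_le_mul_of_nonneg_right r4' hd0
      have h2b := mul_le_mul_of_nonneg_right r3' hd0
      have h3 := mul_le_mul_of_nonneg_right rB2 hD1
      have h3b := mul_le_mul_of_nonneg_right rB1 hD1
      rcases le_or_gt F G with hFG | hFG
      · have hN0 : N = 0 := by omega
        have hma : m + 2 ≤ a + q₁ := by
          have h10 := Nat.mul_le_mul_right q₁ hFG
          omega
        have rma : (m:ℝ) + 2 ≤ a + q₁ := by exact_mod_cast hma
        have h1 := mul_le_mul_of_nonneg_right rma hDd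
        rw [hN0]
        constructor
        · have hscaled : (q₁:ℝ) * (((d:ℝ) - k) * p) ≤ q₁ * (((q₁:ℝ) + d) * d) := by
            linarith [h1, h2, h3]
          have h11 := le_of_mul_le_mul_left hscaled hq₁pos
          push_cast
          linarith
        · push_cast
          linarith [mul_nonneg (by linarith : (0:ℝ) ≤ (d:ℝ) - k)
            (by linarith : (0:ℝ) ≤ (p:ℝ)), hDd]
      · have hNG : N + G = F := by omega
        have hrN : (N:ℝ) * q₁ = F * q₁ - G * q₁ := by
          have h12 : (N:ℝ) + G = F := by exact_mod_cast hNG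
          have h13 : (N:ℝ) = F - G := by linarith
          rw [h13]; ring
        have rup : (N:ℝ) * q₁ ≤ m + q₁ - a := by linarith
        have rlo : (m:ℝ) + 2 - a - q₁ ≤ N * q₁ := by linarith
        have h1 := mul_le_mul_of_nonneg_right rlo hDd
        have h1' := mul_le_mul_of_nonneg_right rup hDd
        constructor
        · have hscaled : (q₁:ℝ) * ((((d:ℝ) - k) * p) - (((q₁:ℝ) + d) * d))
              ≤ q₁ * ((N:ℝ) * (((q₁:ℝ) + d) * d)) := by
            linarith [h1, h2, h3]
          have h11 := le_of_mul_le_mul_left hscaled hq₁pos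
          push_cast
          linarith
        · have hscaled : (q₁:ℝ) * ((N:ℝ) * (((q₁:ℝ) + d) * d))
              ≤ q₁ * ((((d:ℝ) - k) * p) + (((q₁:ℝ) + d) * d)) := by
            linarith [h1', h2b, h3b]
          have h11 := le_of_mul_le_mul_left hscaled hq₁pos
          push_cast
          linarith
    have heq2 : (N : ℝ) - ((q₂:ℝ) - l) * p / ((q₂:ℝ) * (q₂ - q₁)) =
        ((N:ℝ) * ((q₂:ℝ) * (q₂ - q₁)) - ((q₂:ℝ) - l) * p) / ((q₂:ℝ) * (q₂ - q₁)) := by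
      rw [sub_div, mul_div_cancel_right₀ _ hDpos.ne']
    rw [heq2, abs_div, abs_of_pos hDpos, div_le_one hDpos]
    exact key
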